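/- Let Γ be a countable homogeneous structure over a relational signature whose age has the Ramsey property. Then there exists a linear order on the domain of Γ that is preserved by every automorphism of Γ. -/

import Mathlib

open FirstOrder FirstOrder.Language CategoryTheory

universe u v w

/-- The partition arrow `C → (B)^A_r`. -/
def RamseyArrow (L : FirstOrder.Language.{u, v}) (C B A : Type w)
    [L.Structure C] [L.Structure B] [L.Structure A] (r : ℕ) : Prop :=
  ∀ χ : (A ↪[L] C) → Fin r, ∃ f : B ↪[L] C,
    ∀ e₁ e₂ : A ↪[L] B, χ (f.comp e₁) = χ (f.comp e₂)

/-- The age of `Γ`: the class of all finite structures that embed into `Γ`. -/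
def FinAge (L : FirstOrder.Language.{u, v}) (Γ : Type w) [L.Structure Γ] :
    Set (Bundled.{w} L.Structure) :=
  {A | Finite A ∧ Nonempty (A ↪[L] Γ)}

/-- The Ramsey property for a class of finite structures. -/
def HasRamseyProperty (L : FirstOrder.Language.{u, v})
    (K : Set (Bundled.{w} L.Structure)) : Prop :=
  ∀ A ∈ K, ∀ B ∈ K, ∀ r : ℕ, ∃ C ∈ K, RamseyArrow L C B A r

/-- `Γ` is homogeneous. -/
def IsHomogeneous (L : FirstOrder.Language.{u, v}) (Γ : Type w) [L.Structure Γ] : Prop :=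
  ∀ A : Bundled.{w} L.Structure, Finite A → ∀ f g : A ↪[L] Γ,
    ∃ α : Γ ≃[L] Γ, ∀ a : A, α (f a) = g a

section Aux

variable {L : FirstOrder.Language.{u, v}} [L.IsRelational] {Γ : Type w} [L.Structure Γ]

/-- For a relational language, every subset of a structure carries an induced structure. -/
instance setStructure (s : Set Γ) : L.Structure s where
  funMap := fun f _ => isEmptyElim f
  RelMap := fun R v => Structure.RelMap R (fun i => (v i : Γ))

/-- The inclusion of a subset as an embedding. -/
def valEmb (s : Set Γ) : s ↪[L] Γ where
  toFun := Subtype.val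
  inj' := Subtype.val_injective
  map_fun' := fun f _ => isEmptyElim f
  map_rel' := fun _ _ => Iff.rfl

/-- The inclusion between nested subsets as an embedding. -/
def inclEmb {s t : Set Γ} (h : s ⊆ t) : s ↪[L] t where
  toFun := Set.inclusion h
  inj' := Set.inclusion_injective h
  map_fun' := fun f _ => isEmptyElim f
  map_rel' := fun _ _ => Iff.rfl

/-- Restriction of an automorphism to a map between subsets, as an embedding. -/
def mapEmb (α : Γ ≃[L] Γ) {s t : Set Γ} (h : ∀ x ∈ s, α x ∈ t) : s ↪[L] t where
  toFun := fun x => ⟨α x, h x x.2⟩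
  inj' := fun a b hab => Subtype.ext (α.injective (congrArg Subtype.val hab))
  map_fun' := fun f _ => isEmptyElim f
  map_rel' := fun R v => α.map_rel R (fun i => (v i : Γ))

/-- Key finite lemma: given finitely many members of the age, any member `B` of the age
carries a linear order such that any two embeddings of a listed structure into `B`
induce the same order. -/
lemma key_ramsey_order [Countable Γ] (hram : HasRamseyProperty L (FinAge L Γ)) :
    ∀ (l : List (Bundled.{w} L.Structure)), (∀ A ∈ l, A ∈ FinAge L Γ) →
    ∀ B : Bundled.{w} L.Structure, B ∈ FinAge L Γ →
    ∃ q : B → B → Prop, IsLinearOrder B q ∧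
      ∀ A ∈ l, ∀ e₁ e₂ : A ↪[L] B, ∀ a b : A, (q (e₁ a) (e₁ b) ↔ q (e₂ a) (e₂ b)) := by
  classical
  intro l
  induction l with
  | nil =>
    intro _ B hB
    obtain ⟨hBfin, ⟨g⟩⟩ := hB
    obtain ⟨h, hinj⟩ := exists_injective_nat Γ
    refine ⟨fun x y => h (g x) ≤ h (g y), ?_, by simp⟩
    exact { refl := fun x => le_refl _,
            trans := fun x y z => le_trans,
            antisymm := fun x y hxy hyx => g.injective (hinj (le_antisymm hxy hyx)),
            total := fun x y => le_total _ _ }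
  | cons A l ih =>
    intro hl B hB
    have hA : A ∈ FinAge L Γ := hl A List.mem_cons_self
    have : Finite A := hA.1
    have : Fintype A := Fintype.ofFinite _
    set r := Fintype.card (A → A → Bool) with hr
    obtain ⟨C, hC, harr⟩ := hram A hA B hB r
    obtain ⟨qC, hqC, hprop⟩ := ih (fun A' hA' => hl A' (List.mem_cons_of_mem _ hA')) C hC
    let ε : (A → A → Bool) ≃ Fin r := Fintype.equivFin _
    obtain ⟨f, hf⟩ := harr (fun e => ε (fun a b => decide (qC (e a) (e b))))
    refine ⟨fun x y => qC (f x) (f y), ?_, ?_⟩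
    · exact { refl := fun x => hqC.refl _,
              trans := fun x y z h1 h2 => hqC.trans _ _ _ h1 h2,
              antisymm := fun x y h1 h2 => f.injective (hqC.antisymm _ _ h1 h2),
              total := fun x y => hqC.total _ _ }
    · intro A' hA' e₁ e₂ a b
      rcases List.mem_cons.mp hA' with rfl | hA'
      · have h2 : (fun a b => decide (qC ((f.comp e₁) a) ((f.comp e₁) b)))
            = (fun a b => decide (qC ((f.comp e₂) a) ((f.comp e₂) b))) :=
          ε.injective (hf e₁ e₂)
        have h3 := congrFun (congrFun h2 a) b
        simp only [Embedding.comp_apply] at h3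
        exact decide_eq_decide.mp h3
      · simpa only [Embedding.comp_apply] using hprop A' hA' (f.comp e₁) (f.comp e₂) a b

end Aux

/-- A countable homogeneous structure over a relational signature whose age has the Ramsey
property carries a linear order preserved by all of its automorphisms. -/
theorem stmt6 (L : FirstOrder.Language.{u, v}) [L.IsRelational]
    (Γ : Type w) [L.Structure Γ] [Countable Γ]
    (hΓ : IsHomogeneous L Γ) (hram : HasRamseyProperty L (FinAge L Γ)) :
    ∃ r : Γ → Γ → Prop, IsLinearOrder Γ r ∧
      ∀ (α : Γ ≃[L] Γ) (x y : Γ), r x y → r (α x) (α y) := by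
  classical
  -- bundled pair structures
  let Ab : Γ → Γ → Bundled.{w} L.Structure := fun x y => ⟨↥({x, y} : Set Γ), inferInstance⟩
  have hAb : ∀ x y : Γ, Ab x y ∈ FinAge L Γ := by
    intro x y
    refine ⟨?_, ⟨valEmb _⟩⟩
    exact Set.Finite.to_subtype ((Set.finite_singleton y).insert x)
  -- bundled finite substructures
  let Bb : Finset Γ → Bundled.{w} L.Structure := fun F => ⟨↥(↑F : Set Γ), inferInstance⟩
  have hBb : ∀ F : Finset Γ, Bb F ∈ FinAge L Γ := by
    intro F
    exact ⟨Set.Finite.to_subtype F.finite_toSet, ⟨valEmb _⟩⟩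
  -- the list of all pair substructures with entries in F
  let lF : Finset Γ → List (Bundled.{w} L.Structure) := fun F =>
    F.toList.flatMap (fun x => F.toList.map (fun y => Ab x y))
  have hlF : ∀ F : Finset Γ, ∀ A ∈ lF F, A ∈ FinAge L Γ := by
    intro F A hA
    simp only [lF, List.mem_flatMap, List.mem_map] at hA
    obtain ⟨x, -, y, -, rfl⟩ := hA
    exact hAb x y
  have hmemlF : ∀ F : Finset Γ, ∀ x ∈ F, ∀ y ∈ F, Ab x y ∈ lF F := by
    intro F x hx y hy
    simp only [lF, List.mem_flatMap, List.mem_map]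
    exact ⟨x, Finset.mem_toList.mpr hx, y, Finset.mem_toList.mpr hy, rfl⟩
  -- choose, for each finite set, a good linear order
  have hchoice : ∀ F : Finset Γ, ∃ q : (Bb F) → (Bb F) → Prop, IsLinearOrder (Bb F) q ∧
      ∀ A ∈ lF F, ∀ e₁ e₂ : A ↪[L] (Bb F), ∀ a b : A,
        (q (e₁ a) (e₁ b) ↔ q (e₂ a) (e₂ b)) :=
    fun F => key_ramsey_order hram (lF F) (hlF F) (Bb F) (hBb F)
  choose q hqlin hqprop using hchoice
  -- the ultrafilter
  have hne : (Filter.atTop : Filter (Finset Γ)).NeBot := Filter.atTop_neBot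
  let U : Ultrafilter (Finset Γ) := Ultrafilter.of Filter.atTop
  have hU : (U : Filter (Finset Γ)) ≤ Filter.atTop := Ultrafilter.of_le _
  have hmemU : ∀ x : Γ, {F : Finset Γ | x ∈ (↑F : Set Γ)} ∈ U := by
    intro x
    refine hU (Filter.mem_of_superset (Filter.mem_atTop {x}) ?_)
    intro F hF
    have : ({x} : Finset Γ) ⊆ F := hF
    simpa using Finset.singleton_subset_iff.mp this
  -- the limit relation
  let Q : Finset Γ → Γ → Γ → Prop := fun F x y =>
    ∃ hx : x ∈ (↑F : Set Γ), ∃ hy : y ∈ (↑F : Set Γ), q F ⟨x, hx⟩ ⟨y, hy⟩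
  refine ⟨fun x y => x = y ∨ {F : Finset Γ | Q F x y} ∈ U, ?_, ?_⟩
  · refine { refl := fun x => Or.inl rfl, trans := ?_, antisymm := ?_, total := ?_ }
    · -- trans
      intro x y z hxy hyz
      rcases hxy with rfl | hxy
      · exact hyz
      rcases hyz with rfl | hyz
      · exact Or.inr hxy
      refine Or.inr (Filter.mem_of_superset (Filter.inter_mem hxy hyz) ?_)
      rintro F ⟨⟨hx, hy, h1⟩, ⟨hy', hz, h2⟩⟩
      exact ⟨hx, hz, (hqlin F).trans _ _ _ h1 h2⟩
    · -- antisymm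
      intro x y hxy hyx
      rcases hxy with rfl | hxy
      · rfl
      rcases hyx with rfl | hyx
      · rfl
      obtain ⟨F, ⟨hx, hy, h1⟩, ⟨hy', hx', h2⟩⟩ :=
        Filter.nonempty_of_mem (Filter.inter_mem hxy hyx)
      exact congrArg Subtype.val ((hqlin F).antisymm _ _ h1 h2)
    · -- total
      intro x y
      by_cases hxy : x = y
      · exact Or.inl (Or.inl hxy)
      by_cases h1 : {F : Finset Γ | Q F x y} ∈ U
      · exact Or.inl (Or.inr h1)
      refine Or.inr (Or.inr ?_)
      have h2 : {F : Finset Γ | Q F x y}ᶜ ∈ U := Ultrafilter.compl_mem_iff_notMem.mpr h1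
      have h3 := Filter.inter_mem (Filter.inter_mem (hmemU x) (hmemU y)) h2
      refine Filter.mem_of_superset h3 ?_
      rintro F ⟨⟨hx, hy⟩, hnot⟩
      rcases (hqlin F).total ⟨x, hx⟩ ⟨y, hy⟩ with h | h
      · exact absurd ⟨hx, hy, h⟩ hnot
      · exact ⟨hy, hx, h⟩
  · -- invariance
    intro α x y hr
    rcases hr with rfl | hr
    · exact Or.inl rfl
    refine Or.inr ?_
    have h3 := Filter.inter_mem (Filter.inter_mem (Filter.inter_mem (Filter.inter_mem
      (hmemU x) (hmemU y)) (hmemU (α x))) (hmemU (α y))) hr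
    refine Filter.mem_of_superset h3 ?_
    rintro F ⟨⟨⟨⟨hx, hy⟩, hax⟩, hay⟩, hxF, hyF, hq⟩
    -- the two embeddings of the pair {x, y} into F
    have hsub : ({x, y} : Set Γ) ⊆ (↑F : Set Γ) := by
      intro z hz
      rcases hz with rfl | hz
      · exact hx
      · rcases hz with rfl; exact hy
    have hmap : ∀ z ∈ ({x, y} : Set Γ), α z ∈ (↑F : Set Γ) := by
      intro z hz
      rcases hz with rfl | hz
      · exact hax
      · rcases hz with rfl; exact hay
    have hxmemF : x ∈ F := hx
    have hymemF : y ∈ F := hy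
    have hprop := hqprop F (Ab x y) (hmemlF F x hxmemF y hymemF)
      (inclEmb hsub) (mapEmb α hmap)
      ⟨x, Set.mem_insert _ _⟩ ⟨y, Set.mem_insert_of_mem _ rfl⟩
    have hq' : q F ((inclEmb (L := L) hsub) ⟨x, Set.mem_insert _ _⟩)
        ((inclEmb (L := L) hsub) ⟨y, Set.mem_insert_of_mem _ rfl⟩) := hq
    have := hprop.mp hq'
    exact ⟨hax, hay, this⟩
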